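/- Suppose X is a metric space with a geodesic bicombing σ such that every geodesic σ_{xy} is a straight curve. Let E ⊂ X be externally 2-hyperconvex in X. Then E is σ-convex. -/

import Mathlib

/-- A geodesic bicombing on a metric space `X`: a choice `σ x y : ℝ → X` (relevant on
`[0,1]`) of constant-speed geodesics from `x` to `y`, symmetric under swapping endpoints,
satisfying the weak convexity estimate
`d(σ x y t, σ x' y' t) ≤ (1-t) d(x,x') + t d(y,y')`. -/
structure GeodesicBicombing (X : Type*) [MetricSpace X] where
  map : X → X → ℝ → X
  source : ∀ x y, map x y 0 = x
  target : ∀ x y, map x y 1 = y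
  geodesic : ∀ x y, ∀ s ∈ Set.Icc (0 : ℝ) 1, ∀ t ∈ Set.Icc (0 : ℝ) 1,
    dist (map x y s) (map x y t) = |s - t| * dist x y
  symm : ∀ x y, ∀ t ∈ Set.Icc (0 : ℝ) 1, map y x t = map x y (1 - t)
  weak_conv : ∀ x y x' y', ∀ t ∈ Set.Icc (0 : ℝ) 1,
    dist (map x y t) (map x' y' t) ≤ (1 - t) * dist x x' + t * dist y y'

/-- A curve `γ : [0,1] → X` is straight if `t ↦ d(z, γ t)` is convex on `[0,1]` for every
`z ∈ X`. -/
def IsStraight {X : Type*} [MetricSpace X] (γ : ℝ → X) : Prop :=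
  ∀ z : X, ConvexOn ℝ (Set.Icc (0 : ℝ) 1) (fun t => dist z (γ t))

/-- A subset `A` is `σ`-convex if `σ x y ([0,1]) ⊆ A` for all `x, y ∈ A`. -/
def SigmaConvex {X : Type*} [MetricSpace X] (σ : GeodesicBicombing X) (A : Set X) : Prop :=
  ∀ x ∈ A, ∀ y ∈ A, ∀ t ∈ Set.Icc (0 : ℝ) 1, σ.map x y t ∈ A

/-- A subset `A` of a metric space `X` is externally `2`-hyperconvex in `X` if for every
two closed balls `B(x₁,r₁)`, `B(x₂,r₂)` with `d(xᵢ,A) ≤ rᵢ` and `d(x₁,x₂) ≤ r₁ + r₂`, the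
set `A ∩ B(x₁,r₁) ∩ B(x₂,r₂)` is nonempty. -/
def IsExternallyTwoHyperconvex {X : Type*} [MetricSpace X] (A : Set X) : Prop :=
  ∀ (x₁ x₂ : X) (r₁ r₂ : ℝ),
    Metric.infDist x₁ A ≤ r₁ → Metric.infDist x₂ A ≤ r₂ → dist x₁ x₂ ≤ r₁ + r₂ →
    (A ∩ Metric.closedBall x₁ r₁ ∩ Metric.closedBall x₂ r₂).Nonempty

theorem sigmaConvex_of_externallyTwoHyperconvex (X : Type*) [MetricSpace X]
    (σ : GeodesicBicombing X) (hσ : ∀ x y, IsStraight (σ.map x y))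
    (E : Set X) (hE : IsExternallyTwoHyperconvex E) :
    SigmaConvex σ E := by
  have hmem : ∀ p : X, Metric.infDist p E = 0 → p ∈ E := by
    intro p hp
    obtain ⟨q, ⟨hqE, hq1⟩, hq2⟩ := hE p p 0 0 (le_of_eq hp) (le_of_eq hp) (by simp)
    have h1 : dist q p ≤ 0 := hq1
    have : q = p := dist_eq_zero.mp (le_antisymm h1 dist_nonneg)
    rwa [← this]
  intro x hx y hy t ht
  set γ := σ.map x y with hγ
  set d := dist x y with hd
  have hd0 : 0 ≤ d := dist_nonneg
  set f : ℝ → ℝ := fun s => Metric.infDist (γ s) E with hf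
  have hγx : ∀ s ∈ Set.Icc (0:ℝ) 1, dist (γ s) x = s * d := by
    intro s hs
    have h := σ.geodesic x y s hs 0 ⟨le_refl 0, zero_le_one⟩
    rw [σ.source] at h
    simpa [abs_of_nonneg hs.1] using h
  have hγy : ∀ s ∈ Set.Icc (0:ℝ) 1, dist (γ s) y = (1 - s) * d := by
    intro s hs
    have h := σ.geodesic x y s hs 1 ⟨zero_le_one, le_refl 1⟩
    rw [σ.target] at h
    rw [h, abs_of_nonpos (by linarith [hs.2])]
    rw [hd]; ring
  have hfx : ∀ s ∈ Set.Icc (0:ℝ) 1, f s ≤ s * d := by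
    intro s hs
    calc f s ≤ dist (γ s) x := Metric.infDist_le_dist_of_mem hx
    _ = s * d := hγx s hs
  have hfy : ∀ s ∈ Set.Icc (0:ℝ) 1, f s ≤ (1 - s) * d := by
    intro s hs
    calc f s ≤ dist (γ s) y := Metric.infDist_le_dist_of_mem hy
    _ = (1 - s) * d := hγy s hs
  have hfnn : ∀ s, 0 ≤ f s := fun s => Metric.infDist_nonneg
  -- key inequality
  have key : ∀ s u : ℝ, 0 ≤ s → s ≤ u → u ≤ 1 →
      2 * f ((s + u) / 2) ≤ max (f s + f u) ((u - s) * d) := by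
    intro s u hs hsu hu
    have hsI : s ∈ Set.Icc (0:ℝ) 1 := ⟨hs, hsu.trans hu⟩
    have huI : u ∈ Set.Icc (0:ℝ) 1 := ⟨hs.trans hsu, hu⟩
    set ρ := max 0 (((u - s) * d - f s - f u) / 2) with hρ
    have hρ0 : 0 ≤ ρ := le_max_left _ _
    have hρ1 : ((u - s) * d - f s - f u) / 2 ≤ ρ := le_max_right _ _
    have hdistsu : dist (γ s) (γ u) = (u - s) * d := by
      have h := σ.geodesic x y s hsI u huI
      rwa [abs_of_nonpos (by linarith), neg_sub] at h
    obtain ⟨q, ⟨hqE, hq1⟩, hq2⟩ := hE (γ s) (γ u) (f s + ρ) (f u + ρ)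
      (le_add_of_nonneg_right hρ0)
      (le_add_of_nonneg_right hρ0)
      (by rw [hdistsu]; linarith)
    have hq1' : dist q (γ s) ≤ f s + ρ := hq1
    have hq2' : dist q (γ u) ≤ f u + ρ := hq2
    have hconv := (hσ x y q).2 hsI huI (by norm_num : (0:ℝ) ≤ 1/2)
      (by norm_num : (0:ℝ) ≤ 1/2) (by norm_num)
    have hmid : (1/2 : ℝ) • s + (1/2 : ℝ) • u = (s + u) / 2 := by
      simp [smul_eq_mul]; ring
    rw [hmid] at hconv
    simp only [smul_eq_mul, ← hγ] at hconv
    have hconv' : dist q (γ ((s + u) / 2)) ≤ 1/2 * dist q (γ s) + 1/2 * dist q (γ u) := hconv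
    have hfm : f ((s + u) / 2) ≤ dist q (γ ((s + u) / 2)) := by
      rw [dist_comm]
      exact Metric.infDist_le_dist_of_mem hqE
    have hmax : f s + f u + 2 * ρ = max (f s + f u) ((u - s) * d) := by
      rcases le_total ((u - s) * d) (f s + f u) with h | h
      · rw [max_eq_left h, hρ, max_eq_left (by linarith)]; ring
      · rw [max_eq_right h, hρ, max_eq_right (by linarith)]; ring
    linarith
  -- trivial case d = 0
  rcases eq_or_lt_of_le hd0 with hd0' | hdpos
  · have : dist (γ t) x = t * d := hγx t ht
    rw [← hd0'] at this
    have : γ t = x := by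
      have h0 : dist (γ t) x = 0 := by rw [this]; ring
      exact dist_eq_zero.mp h0
    rwa [this]
  -- continuity of f on Icc
  have hγlip : LipschitzOnWith (Real.toNNReal d) γ (Set.Icc 0 1) := by
    rw [lipschitzOnWith_iff_dist_le_mul]
    intro a ha b hb
    have h := σ.geodesic x y a ha b hb
    rw [h, Real.coe_toNNReal d hd0]
    rw [Real.dist_eq, mul_comm]
  have hfcont : ContinuousOn f (Set.Icc 0 1) := by
    exact (Metric.continuous_infDist_pt E).comp_continuousOn hγlip.continuousOn
  obtain ⟨c, hcI, hc⟩ := isCompact_Icc.exists_isMaxOn (by exact ⟨0, by norm_num⟩) hfcont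
  set M := f c with hM
  rcases le_or_gt M 0 with hM0 | hMpos
  · exact hmem _ (le_antisymm (le_trans (hc ht) hM0) (hfnn t))
  exfalso
  have hMd : M ≤ c * d := hfx c hcI
  have hMd' : M ≤ (1 - c) * d := hfy c hcI
  set S := Set.Icc (0:ℝ) 1 ∩ f ⁻¹' {M} with hS
  have hSclosed : IsClosed S :=
    hfcont.preimage_isClosed_of_isClosed isClosed_Icc isClosed_singleton
  have hSne : S.Nonempty := ⟨c, hcI, rfl⟩
  have hSbdd : BddBelow S := ⟨0, fun z hz => hz.1.1⟩
  set a := sInf S with ha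
  have haS : a ∈ S := hSclosed.csInf_mem hSne hSbdd
  have haI : a ∈ Set.Icc (0:ℝ) 1 := haS.1
  have hfa : f a = M := haS.2
  set ε := M / (2 * d) with hε
  have hεpos : 0 < ε := div_pos hMpos (by linarith)
  have haMd : M ≤ a * d := by rw [← hfa]; exact hfx a haI
  have haMd' : M ≤ (1 - a) * d := by rw [← hfa]; exact hfy a haI
  have hs0 : 0 ≤ a - ε := by
    have : ε ≤ a / 2 := by
      rw [hε, div_le_div_iff₀ (by linarith) (by norm_num)]
      nlinarith
    have ha0 : 0 < a := by nlinarith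
    linarith
  have hu1 : a + ε ≤ 1 := by
    have : ε ≤ (1 - a) / 2 := by
      rw [hε, div_le_div_iff₀ (by linarith) (by norm_num)]
      nlinarith
    nlinarith
  have hkey := key (a - ε) (a + ε) hs0 (by linarith) hu1
  have hmid : ((a - ε) + (a + ε)) / 2 = a := by ring
  rw [hmid, hfa] at hkey
  have hεd : (a + ε - (a - ε)) * d = M := by
    rw [hε]; field_simp; ring
  rw [hεd] at hkey
  have hfs : f (a - ε) ≤ M := hc ⟨hs0, by linarith⟩
  have hfu : f (a + ε) ≤ M := hc ⟨by linarith, hu1⟩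
  have h2M : 2 * M ≤ f (a - ε) + f (a + ε) := by
    rcases max_cases (f (a - ε) + f (a + ε)) M with ⟨heq, _⟩ | ⟨heq, _⟩
    · rwa [heq] at hkey
    · rw [heq] at hkey; linarith
  have hfseq : f (a - ε) = M := le_antisymm hfs (by linarith)
  have : a ≤ a - ε := csInf_le hSbdd ⟨⟨hs0, by linarith⟩, hfseq⟩
  linarith
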